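/- Let F be a commutative field and K a commutative field extension of F. If A is an amenable F-algebra (an F-algebra satisfying the Følner-type condition of Elek), then K ⊗_F A is an amenable K-algebra. -/

import Mathlib

open scoped TensorProduct

/-- An `F`-algebra `A` is amenable (in the sense of Elek) if for every finite subset
`{r₁, …, rₙ} ⊆ A` and every `ε > 0` there is a nonzero finite-dimensional `F`-subspace
`V` of `A` with `dim_F (Σᵢ rᵢ V) < (1 + ε) · dim_F V`. -/
def IsAmenableAlgebra (F A : Type*) [Field F] [Ring A] [Algebra F A] : Prop :=
  ∀ (s : Finset A) (ε : ℝ), 0 < ε →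
    ∃ V : Submodule F A, V ≠ ⊥ ∧ FiniteDimensional F ↥V ∧
      (Module.finrank F ↥(⨆ r ∈ s, V.map (LinearMap.mulLeft F r)) : ℝ) <
        (1 + ε) * (Module.finrank F ↥V : ℝ)

section Aux

variable (F K A : Type*) [Field F] [Field K] [Algebra F K] [Ring A] [Algebra F A]

/-- `K ⊗ V` is `K`-linearly equivalent to the base change of `V` inside `K ⊗ A`. -/
noncomputable def bcEquiv (V : Submodule F A) : (K ⊗[F] V) ≃ₗ[K] (V.baseChange K) := by
  have hinj : Function.Injective (LinearMap.baseChange K V.subtype) := by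
    rw [LinearMap.baseChange_eq_ltensor]
    exact Module.Flat.lTensor_preserves_injective_linearMap _ V.injective_subtype
  have hrange : LinearMap.range (LinearMap.baseChange K V.subtype) = V.baseChange K := by
    apply le_antisymm
    · rintro x ⟨y, rfl⟩
      induction y using TensorProduct.induction_on with
      | zero => simp
      | tmul k v => simpa using Submodule.tmul_mem_baseChange_of_mem k v.2
      | add x y hx hy => rw [map_add]; exact Submodule.add_mem _ hx hy
    · rw [Submodule.baseChange_eq_span, Submodule.span_le]
      rintro x ⟨m, hm, rfl⟩
      exact ⟨1 ⊗ₜ ⟨m, hm⟩, by simp⟩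
  exact (LinearEquiv.ofInjective _ hinj).trans (LinearEquiv.ofEq _ _ hrange)

theorem bc_fd (V : Submodule F A) [FiniteDimensional F V] :
    FiniteDimensional K (V.baseChange K) :=
  Module.Finite.equiv (bcEquiv F K A V)

theorem bc_finrank (V : Submodule F A) :
    Module.finrank K (V.baseChange K) = Module.finrank F V := by
  rw [← (bcEquiv F K A V).finrank_eq, Module.finrank_baseChange]

end Aux

/-- If `K` is a commutative field extension of `F` and `A` is an
amenable `F`-algebra, then `K ⊗_F A` is an amenable `K`-algebra. -/
theorem amenable_base_change (F K A : Type*) [Field F] [Field K] [Algebra F K]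
    [Ring A] [Algebra F A] (h : IsAmenableAlgebra F A) :
    IsAmenableAlgebra K (K ⊗[F] A) := by
  classical
  intro s ε hε
  choose rep hrep using fun r : K ⊗[F] A => TensorProduct.exists_finset r
  set t : Finset A := s.biUnion (fun r => (rep r).image Prod.snd) with ht
  obtain ⟨V, hV0, hfd, hlt⟩ := h t ε hε
  haveI := hfd
  haveI : FiniteDimensional K (V.baseChange K) := bc_fd F K A V
  set U : Submodule F A := ⨆ a ∈ t, V.map (LinearMap.mulLeft F a) with hU
  haveI hUfd : FiniteDimensional F U := by
    rw [hU, ← Finset.sup_eq_iSup]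
    haveI : ∀ a : A, FiniteDimensional F (V.map (LinearMap.mulLeft F a)) := fun a =>
      Module.Finite.map V (LinearMap.mulLeft F a)
    exact Submodule.finiteDimensional_finset_sup t _
  haveI : FiniteDimensional K (U.baseChange K) := bc_fd F K A U
  refine ⟨V.baseChange K, ?_, inferInstance, ?_⟩
  · intro hbot
    apply hV0
    have h1 : Module.finrank K (V.baseChange K) = 0 := by rw [hbot]; simp
    rw [bc_finrank] at h1
    exact Submodule.finrank_eq_zero.mp h1
  · have hle : (⨆ r ∈ s, (V.baseChange K).map (LinearMap.mulLeft K r)) ≤ U.baseChange K := by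
      refine iSup₂_le fun r hr => ?_
      rw [Submodule.map_le_iff_le_comap, Submodule.baseChange_eq_span, Submodule.span_le]
      rintro x ⟨v, hv, rfl⟩
      simp only [SetLike.mem_coe, Submodule.mem_comap, LinearMap.mulLeft_apply]
      rw [hrep r, Finset.sum_mul]
      refine Submodule.sum_mem _ fun p hp => ?_
      have : (p.1 ⊗ₜ[F] p.2) * ((TensorProduct.mk F K A 1) v) = p.1 ⊗ₜ[F] (p.2 * v) := by
        simp [Algebra.TensorProduct.tmul_mul_tmul]
      rw [this]
      refine Submodule.tmul_mem_baseChange_of_mem _ ?_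
      have hpt : p.2 ∈ t := Finset.mem_biUnion.2 ⟨r, hr, Finset.mem_image_of_mem _ hp⟩
      exact (le_iSup₂ (f := fun a (_ : a ∈ t) => V.map (LinearMap.mulLeft F a)) p.2 hpt)
        ⟨v, hv, rfl⟩
    calc (Module.finrank K ↥(⨆ r ∈ s, (V.baseChange K).map (LinearMap.mulLeft K r)) : ℝ)
        ≤ (Module.finrank K (U.baseChange K) : ℝ) :=
          Nat.cast_le.mpr (Submodule.finrank_mono hle)
      _ = (Module.finrank F U : ℝ) := by rw [bc_finrank]
      _ < (1 + ε) * (Module.finrank F V : ℝ) := hlt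
      _ = (1 + ε) * (Module.finrank K (V.baseChange K) : ℝ) := by rw [bc_finrank]
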